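/- Let G be a group acting on functions and let M^s denote order-s forms. Suppose Λ_L ∈ M^{s+1} (for L ranging over s-tuples from {1,…,n}) satisfy Λ_L·((γ_{i₁}−1)⋯(γ_{i_s}−1)) = δ_I^L (Kronecker delta, as constant functions) for all s-tuples I, and that constants are G-invariant. Then for any family (f_L)_L of G-invariant functions (f_L ∈ M^1), the function F = Σ_L f_L Λ_L satisfies F·((γ_{i₁}−1)⋯(γ_{i_s}−1)) = f_I for every s-tuple I, and F ∈ M^{s+1} for the weight-k action when the f_L have weight k. -/

import Mathlib

/-- The augmentation ideal of `ℂ[G]`. -/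
noncomputable def augIdeal (G : Type*) [Group G] : Ideal (MonoidAlgebra ℂ G) :=
  RingHom.ker ((MonoidAlgebra.lift ℂ ℂ G (1 : G →* ℂ)) :
    MonoidAlgebra ℂ G →ₐ[ℂ] ℂ).toRingHom

/-- The weight-`k` action of `ℂ[G]` on functions `H → ℂ` associated with an automorphy
factor `j : G → H → ℂ`, extending `(F|ₖγ)(z) = j(γ,z)·F(γ·z)` by linearity.
(The weight-0 action is the case `j ≡ 1`.) -/
noncomputable def actWt {G H : Type*} [Group G] [MulAction G H] (j : G → H → ℂ)
    (δ : MonoidAlgebra ℂ G) (F : H → ℂ) : H → ℂ :=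
  fun z => δ.coeff.sum fun γ c => c * (j γ z * F (γ • z))

private lemma actWt_invmul {G H : Type*} [Group G] [MulAction G H] (j : G → H → ℂ)
    (δ : MonoidAlgebra ℂ G) (f Λ : H → ℂ)
    (hf : ∀ (g : G) (z : H), j g z * f (g • z) = f z) (z : H) :
    actWt j δ (fun w => f w * Λ w) z = f z * actWt (fun _ _ => 1) δ Λ z := by
  unfold actWt
  simp only [Finsupp.sum, Finset.mul_sum]
  refine Finset.sum_congr rfl fun g _ => ?_
  rw [← hf g z]; ring

private lemma actWt_sum {G H : Type*} [Group G] [MulAction G H] (j : G → H → ℂ)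
    (δ : MonoidAlgebra ℂ G) {ι : Type*} (t : Finset ι) (Fs : ι → H → ℂ) (z : H) :
    actWt j δ (fun w => ∑ L ∈ t, Fs L w) z = ∑ L ∈ t, actWt j δ (Fs L) z := by
  unfold actWt
  simp only [Finsupp.sum]
  rw [Finset.sum_congr rfl fun g _ => by rw [Finset.mul_sum, Finset.mul_sum]]
  exact Finset.sum_comm

/-- Surjectivity step of the classification theorem: suppose `Λ_L ∈ M̃^{s+1}` (weight 0)
satisfy `Λ_L·((γ_{i₁}−1)⋯(γ_{i_s}−1)) = δ_I^L` (Kronecker delta, as constants) and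
`Λ_L·J^{s+1} = 0`. Then for any family `f_L` of functions invariant under the weight-`k`
action, `F = Σ_L f_L Λ_L` satisfies `F|ₖ((γ_{i₁}−1)⋯(γ_{i_s}−1)) = f_I` for every
`s`-tuple `I`, and `F·J^{s+1} = 0`, i.e. `F ∈ M^{s+1}` for the weight-`k` action. -/
theorem surjectivity_step {G H : Type*} [Group G] [MulAction G H]
    (j : G → H → ℂ) (hj : ∀ (g₁ g₂ : G) (z : H), j (g₁ * g₂) z = j g₁ (g₂ • z) * j g₂ z)
    (n s : ℕ) (γ : Fin n → G) (Λ f : (Fin s → Fin n) → H → ℂ)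
    (hΛ : ∀ (I L : Fin s → Fin n) (z : H),
      actWt (fun _ _ => 1)
        ((List.ofFn fun k =>
          (MonoidAlgebra.of ℂ G (γ (I k)) - 1 : MonoidAlgebra ℂ G)).prod) (Λ L) z
        = if I = L then 1 else 0)
    (hΛhigh : ∀ L, ∀ δ ∈ augIdeal G ^ (s + 1), actWt (fun _ _ => 1) δ (Λ L) = 0)
    (hfInv : ∀ (L : Fin s → Fin n) (g : G) (z : H), j g z * f L (g • z) = f L z) :
    let F : H → ℂ := fun z => ∑ L : Fin s → Fin n, f L z * Λ L z
    (∀ (I : Fin s → Fin n) (z : H),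
      actWt j ((List.ofFn fun k =>
        (MonoidAlgebra.of ℂ G (γ (I k)) - 1 : MonoidAlgebra ℂ G)).prod) F z = f I z) ∧
    (∀ δ ∈ augIdeal G ^ (s + 1), actWt j δ F = 0) := by
  intro F
  have key : ∀ (δ : MonoidAlgebra ℂ G) (z : H),
      actWt j δ F z = ∑ L : Fin s → Fin n, f L z * actWt (fun _ _ => 1) δ (Λ L) z := by
    intro δ z
    rw [show F = fun w => ∑ L : Fin s → Fin n, f L w * Λ L w from rfl,
      actWt_sum j δ Finset.univ (fun L w => f L w * Λ L w) z]
    exact Finset.sum_congr rfl fun L _ => actWt_invmul j δ (f L) (Λ L) (hfInv L) z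
  constructor
  · intro I z
    rw [key, Finset.sum_congr rfl fun L _ => by rw [hΛ I L z]]
    simp
  · intro δ hδ
    funext z
    rw [key]
    simp only [hΛhigh _ δ hδ, Pi.zero_apply, mul_zero, Finset.sum_const_zero]
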